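/- Let γ = ((i₁ j₁),…,(i_k j_k)) ∈ Σ*_n(k). Then the elements j₁,…,j_k are pairwise distinct, and for every l ∈ {1,…,k}, j_l is a fixed point of γ_{l−1}, i.e. γ_{l−1}(j_l) = j_l. -/

import Mathlib

/-- ℓ(σ): the number of cycles (orbits) of σ, including fixed points, counted via the
minimal representative of each orbit. -/
noncomputable def cycleCount {n : ℕ} (σ : Equiv.Perm (Fin n)) : ℕ :=
  Set.ncard {x : Fin n | ∀ y, σ.SameCycle x y → x ≤ y}

/-- |σ| := n − ℓ(σ). -/
noncomputable def normPerm {n : ℕ} (σ : Equiv.Perm (Fin n)) : ℕ := n - cycleCount σ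

/-- σ₁ ≼ σ₂ iff |σ₂| = |σ₁| + |σ₁⁻¹σ₂|. -/
def precLe {n : ℕ} (σ₁ σ₂ : Equiv.Perm (Fin n)) : Prop :=
  normPerm σ₂ = normPerm σ₁ + normPerm (σ₁⁻¹ * σ₂)

/-- Σ_n(k): tuples of k transpositions with |τ₁⋯τ_k| = k and τ₁⋯τ_k ≼ (1 … n). -/
def SigmaSet (n k : ℕ) : Set (Fin k → Equiv.Perm (Fin n)) :=
  {τ | (∀ l, (τ l).IsSwap) ∧ normPerm (List.ofFn τ).prod = k ∧
      precLe (List.ofFn τ).prod (finRotate n)}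

/-- γ_m := τ₁∘⋯∘τ_m, the product of the first m entries of the chain. -/
def gammaP {n k : ℕ} (τ : Fin k → Equiv.Perm (Fin n)) (m : ℕ) : Equiv.Perm (Fin n) :=
  ((List.ofFn τ).take m).prod

namespace S11Aux

open Equiv Equiv.Perm

variable {n : ℕ}

/-- "at most one descent per cycle" -/
def Pp (σ : Equiv.Perm (Fin n)) : Prop :=
  ∀ x y, σ.SameCycle x y → σ x < x → σ y < y → x = y

lemma pow_apply_succ (σ : Equiv.Perm (Fin n)) (t : ℕ) (x : Fin n) :
    (σ ^ (t + 1)) x = σ ((σ ^ t) x) := by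
  rw [pow_succ', Equiv.Perm.mul_apply]

lemma sc_exists_pow {σ : Equiv.Perm (Fin n)} {x y : Fin n} (h : σ.SameCycle x y) :
    ∃ s : ℕ, (σ ^ s) x = y := by
  obtain ⟨i, -, hi⟩ := h.exists_pow_eq'
  exact ⟨i, hi⟩

lemma sc_pow_self (σ : Equiv.Perm (Fin n)) (x : Fin n) (s : ℕ) :
    σ.SameCycle x ((σ ^ s) x) :=
  ⟨(s : ℤ), by rw [zpow_natCast]⟩

/-- guided iteration: as long as the σ-trajectory of v avoids u and v, the
(σ * swap u v)-trajectory of u follows it. -/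
lemma guided {σ : Equiv.Perm (Fin n)} (u v : Fin n) {q : ℕ}
    (havoid : ∀ t, 0 < t → t < q → (σ ^ t) v ≠ u ∧ (σ ^ t) v ≠ v) :
    ∀ t, 0 < t → t ≤ q → ((σ * Equiv.swap u v) ^ t) u = (σ ^ t) v := by
  intro t
  induction t with
  | zero => omega
  | succ t ih =>
    intro _ hle
    rcases Nat.eq_zero_or_pos t with rfl | hpos
    · simp [Equiv.Perm.mul_apply]
    · have hme := ih hpos (by omega)
      have ⟨h1, h2⟩ := havoid t hpos (by omega)
      rw [pow_apply_succ, hme, Equiv.Perm.mul_apply, Equiv.swap_apply_of_ne_of_ne h1 h2,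
        ← pow_apply_succ]

lemma merge_sc_uv {σ : Equiv.Perm (Fin n)} {u v : Fin n} (hne : u ≠ v)
    (hnot : ¬σ.SameCycle u v) : (σ * Equiv.swap u v).SameCycle u v := by
  have hex : ∃ p, 0 < p ∧ (σ ^ p) v = v :=
    ⟨orderOf σ, orderOf_pos σ, by rw [pow_orderOf_eq_one]; rfl⟩
  obtain ⟨hp, hpv⟩ := Nat.find_spec hex
  have havoid : ∀ t, 0 < t → t < Nat.find hex → (σ ^ t) v ≠ u ∧ (σ ^ t) v ≠ v := by
    intro t ht htp
    constructor
    · intro h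
      exact hnot (h ▸ (sc_pow_self σ v t)).symm
    · intro h
      exact Nat.find_min hex htp ⟨ht, h⟩
  have hg := guided u v havoid (Nat.find hex) hp le_rfl
  exact ⟨((Nat.find hex : ℕ) : ℤ), by rw [zpow_natCast, hg, hpv]⟩

lemma merge_sc_step {σ : Equiv.Perm (Fin n)} {u v : Fin n} (hne : u ≠ v)
    (hnot : ¬σ.SameCycle u v) (x : Fin n) :
    (σ * Equiv.swap u v).SameCycle x (σ x) := by
  rcases eq_or_ne x u with rfl | hxu
  · have h1 : σ x = (σ * Equiv.swap x v) v := by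
      rw [Equiv.Perm.mul_apply, Equiv.swap_apply_right]
    rw [h1]
    exact (merge_sc_uv hne hnot).apply_right
  rcases eq_or_ne x v with rfl | hxv
  · have h1 : σ x = (σ * Equiv.swap u x) u := by
      rw [Equiv.Perm.mul_apply, Equiv.swap_apply_left]
    rw [h1]
    exact (merge_sc_uv hne hnot).symm.apply_right
  · have h1 : σ x = (σ * Equiv.swap u v) x := by
      rw [Equiv.Perm.mul_apply, Equiv.swap_apply_of_ne_of_ne hxu hxv]
    rw [h1]
    exact (Equiv.Perm.SameCycle.refl _ x).apply_right

lemma merge_sc_le {σ : Equiv.Perm (Fin n)} {u v : Fin n} (hne : u ≠ v)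
    (hnot : ¬σ.SameCycle u v) {x y : Fin n} (h : σ.SameCycle x y) :
    (σ * Equiv.swap u v).SameCycle x y := by
  obtain ⟨s, rfl⟩ := sc_exists_pow h
  clear h
  induction s with
  | zero => simpa using Equiv.Perm.SameCycle.refl _ x
  | succ s ih => rw [pow_apply_succ]; exact ih.trans (merge_sc_step hne hnot _)

lemma merge_sc_iff {σ : Equiv.Perm (Fin n)} {u v : Fin n} (hne : u ≠ v)
    (hnot : ¬σ.SameCycle u v) (x y : Fin n) :
    (σ * Equiv.swap u v).SameCycle x y ↔
      σ.SameCycle x y ∨ (σ.SameCycle x u ∧ σ.SameCycle v y) ∨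
        (σ.SameCycle x v ∧ σ.SameCycle u y) := by
  constructor
  · intro h
    obtain ⟨s, rfl⟩ := sc_exists_pow h
    clear h
    induction s with
    | zero => left; simpa using Equiv.Perm.SameCycle.refl σ x
    | succ s ih =>
      rw [pow_apply_succ]
      set z := ((σ * Equiv.swap u v) ^ s) x with hz
      rcases eq_or_ne z u with hzu | hzu
      · have hval : (σ * Equiv.swap u v) z = σ v := by
          rw [hzu, Equiv.Perm.mul_apply, Equiv.swap_apply_left]
        rw [hval]
        rcases ih with h1 | ⟨h1, h2⟩ | ⟨h1, h2⟩
        · right; left; exact ⟨hzu ▸ h1, (Equiv.Perm.SameCycle.refl σ v).apply_right⟩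
        · exact absurd (hzu ▸ h2).symm hnot
        · left; exact h1.apply_right
      rcases eq_or_ne z v with hzv | hzv
      · have hval : (σ * Equiv.swap u v) z = σ u := by
          rw [hzv, Equiv.Perm.mul_apply, Equiv.swap_apply_right]
        rw [hval]
        rcases ih with h1 | ⟨h1, h2⟩ | ⟨h1, h2⟩
        · right; right; exact ⟨hzv ▸ h1, (Equiv.Perm.SameCycle.refl σ u).apply_right⟩
        · left; exact h1.apply_right
        · exact absurd (hzv ▸ h2) hnot
      · have hval : (σ * Equiv.swap u v) z = σ z := by
          rw [Equiv.Perm.mul_apply, Equiv.swap_apply_of_ne_of_ne hzu hzv]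
        rw [hval]
        rcases ih with h1 | ⟨h1, h2⟩ | ⟨h1, h2⟩
        · left; exact h1.apply_right
        · right; left; exact ⟨h1, h2.apply_right⟩
        · right; right; exact ⟨h1, h2.apply_right⟩
  · rintro (h | ⟨h1, h2⟩ | ⟨h1, h2⟩)
    · exact merge_sc_le hne hnot h
    · exact (merge_sc_le hne hnot h1).trans
        ((merge_sc_uv hne hnot).trans (merge_sc_le hne hnot h2))
    · exact (merge_sc_le hne hnot h1).trans
        ((merge_sc_uv hne hnot).symm.trans (merge_sc_le hne hnot h2))

/-- the set of minimal representatives -/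
def Mset (σ : Equiv.Perm (Fin n)) : Set (Fin n) := {x | ∀ y, σ.SameCycle x y → x ≤ y}

lemma cycleCount_eq (σ : Equiv.Perm (Fin n)) : cycleCount σ = (Mset σ).ncard := rfl

lemma exists_min (σ : Equiv.Perm (Fin n)) (x : Fin n) :
    ∃ a, σ.SameCycle x a ∧ ∀ y, σ.SameCycle a y → a ≤ y := by
  obtain ⟨a, ha, hmin⟩ := Set.exists_min_image {y | σ.SameCycle x y} id (Set.toFinite _)
    ⟨x, Equiv.Perm.SameCycle.refl σ x⟩
  exact ⟨a, ha, fun y hy => hmin y (Set.mem_setOf_eq ▸ (ha.trans hy))⟩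

lemma mset_merge {σ : Equiv.Perm (Fin n)} {u v a b : Fin n} (hne : u ≠ v)
    (hnot : ¬σ.SameCycle u v)
    (hau : σ.SameCycle u a) (hamin : ∀ y, σ.SameCycle a y → a ≤ y)
    (hbv : σ.SameCycle v b) (hbmin : ∀ y, σ.SameCycle b y → b ≤ y)
    (hab : a < b) :
    Mset (σ * Equiv.swap u v) = Mset σ \ {b} := by
  ext x
  constructor
  · intro hx
    have hxM : x ∈ Mset σ := fun y hy => hx y (merge_sc_le hne hnot hy)
    refine ⟨hxM, ?_⟩
    intro hxb
    simp only [Set.mem_singleton_iff] at hxb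
    subst hxb
    have hscba : (σ * Equiv.swap u v).SameCycle x a :=
      (merge_sc_le hne hnot hbv.symm).trans
        ((merge_sc_uv hne hnot).symm.trans (merge_sc_le hne hnot hau))
    exact absurd (hx a hscba) (not_le.mpr hab)
  · rintro ⟨hxM, hxb⟩
    simp only [Set.mem_singleton_iff] at hxb
    intro y hy
    rcases (merge_sc_iff hne hnot x y).mp hy with h | ⟨h1, h2⟩ | ⟨h1, h2⟩
    · exact hxM y h
    · have hxa : x = a := le_antisymm (hxM a (h1.trans hau)) (hamin x (hau.symm.trans h1.symm))
      have hby : b ≤ y := hbmin y (hbv.symm.trans h2)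
      exact le_of_lt (lt_of_lt_of_le (hxa ▸ hab) hby)
    · exact absurd (le_antisymm (hxM b (h1.trans hbv)) (hbmin x (hbv.symm.trans h1.symm))) hxb

lemma ncard_diff_helper {s : Set (Fin n)} {w : Fin n} (hw : w ∈ s) :
    (s \ {w}).ncard + 1 = s.ncard := by
  have h2 : (insert w (s \ {w})).ncard = (s \ {w}).ncard + 1 :=
    Set.ncard_insert_of_notMem (fun hc => hc.2 rfl) (Set.toFinite _)
  rw [Set.insert_diff_singleton, Set.insert_eq_of_mem hw] at h2
  omega

lemma cycleCount_merge {σ : Equiv.Perm (Fin n)} {u v : Fin n} (hne : u ≠ v)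
    (hnot : ¬σ.SameCycle u v) :
    cycleCount (σ * Equiv.swap u v) + 1 = cycleCount σ := by
  obtain ⟨a, hau, hamin⟩ := exists_min σ u
  obtain ⟨b, hbv, hbmin⟩ := exists_min σ v
  have hab : a ≠ b := fun h => hnot (hau.trans ((h ▸ hbv.symm : σ.SameCycle a v)))
  rcases lt_or_gt_of_ne hab with h | h
  · rw [cycleCount_eq, cycleCount_eq, mset_merge hne hnot hau hamin hbv hbmin h]
    exact ncard_diff_helper hbmin
  · have hcomm : σ * Equiv.swap u v = σ * Equiv.swap v u := by rw [Equiv.swap_comm]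
    rw [cycleCount_eq, cycleCount_eq, hcomm,
      mset_merge hne.symm (fun hc => hnot hc.symm) hbv hbmin hau hamin h]
    exact ncard_diff_helper hamin

lemma split_orbit {σ : Equiv.Perm (Fin n)} {u v : Fin n} (hne : u ≠ v) {q : ℕ}
    (hq : 0 < q) (hqv : (σ ^ q) v = u)
    (hmin : ∀ t, 0 < t → t < q → (σ ^ t) v ≠ u) :
    ∀ s : ℕ, ((σ * Equiv.swap u v) ^ s) u = u ∨
      ∃ t, 0 < t ∧ t < q ∧ (σ ^ t) v = ((σ * Equiv.swap u v) ^ s) u := by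
  have havoid_v : ∀ t, 0 < t → t < q → (σ ^ t) v ≠ v := by
    intro t ht htq hveq
    have h2 : (σ ^ (q - t)) ((σ ^ t) v) = u := by
      rw [← Equiv.Perm.mul_apply, ← pow_add, Nat.sub_add_cancel (le_of_lt htq)]
      exact hqv
    rw [hveq] at h2
    exact hmin (q - t) (by omega) (by omega) h2
  intro s
  induction s with
  | zero => left; simp
  | succ s ih =>
    rw [pow_apply_succ]
    rcases ih with h | ⟨t, ht, htq, hteq⟩
    · rw [h]
      have hval : (σ * Equiv.swap u v) u = (σ ^ 1) v := by
        rw [Equiv.Perm.mul_apply, Equiv.swap_apply_left, pow_one]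
      rcases eq_or_lt_of_le (show 1 ≤ q from hq) with he | hlt
      · left; rw [hval, he]; exact hqv
      · right; exact ⟨1, one_pos, hlt, hval.symm⟩
    · rw [← hteq]
      have h1 : (σ ^ t) v ≠ u := hmin t ht htq
      have h2 : (σ ^ t) v ≠ v := havoid_v t ht htq
      have hval : (σ * Equiv.swap u v) ((σ ^ t) v) = (σ ^ (t + 1)) v := by
        rw [Equiv.Perm.mul_apply, Equiv.swap_apply_of_ne_of_ne h1 h2, ← pow_apply_succ]
      rcases eq_or_lt_of_le (show t + 1 ≤ q from htq) with he | hlt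
      · left; rw [hval, he]; exact hqv
      · right; exact ⟨t + 1, by omega, hlt, hval.symm⟩

lemma split_not_sc {σ : Equiv.Perm (Fin n)} {u v : Fin n} (hsc : σ.SameCycle u v)
    (hne : u ≠ v) : ¬(σ * Equiv.swap u v).SameCycle u v := by
  intro hcon
  have hex : ∃ s, 0 < s ∧ (σ ^ s) v = u := by
    obtain ⟨s, hs⟩ := sc_exists_pow hsc.symm
    refine ⟨s, ?_, hs⟩
    rcases Nat.eq_zero_or_pos s with rfl | h
    · rw [pow_zero] at hs; exact absurd hs.symm hne
    · exact h
  obtain ⟨hq, hqv⟩ := Nat.find_spec hex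
  have hmin : ∀ t, 0 < t → t < Nat.find hex → (σ ^ t) v ≠ u :=
    fun t ht htq hc => Nat.find_min hex htq ⟨ht, hc⟩
  obtain ⟨s, hs⟩ := sc_exists_pow hcon
  rcases split_orbit hne hq hqv hmin s with h | ⟨t, ht, htq, hteq⟩
  · rw [hs] at h; exact hne h.symm
  · rw [hs] at hteq
    have h2 : (σ ^ (Nat.find hex - t)) ((σ ^ t) v) = u := by
      rw [← Equiv.Perm.mul_apply, ← pow_add, Nat.sub_add_cancel (le_of_lt htq)]
      exact hqv
    rw [hteq] at h2
    exact hmin (Nat.find hex - t) (by omega) (by omega) h2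

lemma cycleCount_split {σ : Equiv.Perm (Fin n)} {u v : Fin n} (hsc : σ.SameCycle u v)
    (hne : u ≠ v) : cycleCount (σ * Equiv.swap u v) = cycleCount σ + 1 := by
  have h2 := split_not_sc hsc hne
  have h3 := cycleCount_merge hne h2
  rw [mul_assoc, Equiv.swap_mul_self, mul_one] at h3
  omega

lemma cycleCount_le_n (σ : Equiv.Perm (Fin n)) : cycleCount σ ≤ n := by
  rw [cycleCount_eq]
  have := Set.ncard_le_ncard (Set.subset_univ (Mset σ)) Set.finite_univ
  rwa [Set.ncard_univ, Nat.card_eq_fintype_card, Fintype.card_fin] at this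

lemma cycleCount_pos (hn : 0 < n) (σ : Equiv.Perm (Fin n)) : 0 < cycleCount σ := by
  obtain ⟨a, _, hmin⟩ := exists_min σ ⟨0, hn⟩
  rw [cycleCount_eq]
  exact (Set.ncard_pos (Set.toFinite _)).mpr ⟨a, hmin⟩

lemma cycleCount_one : cycleCount (1 : Equiv.Perm (Fin n)) = n := by
  rw [cycleCount_eq]
  have hM : Mset (1 : Equiv.Perm (Fin n)) = Set.univ := by
    ext x
    simp only [Mset, Set.mem_setOf_eq, Set.mem_univ, iff_true]
    intro y hy
    rw [Equiv.Perm.sameCycle_one] at hy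
    exact le_of_eq (by rw [hy])
  rw [hM, Set.ncard_univ, Nat.card_eq_fintype_card, Fintype.card_fin]

lemma eq_one_of_le {σ : Equiv.Perm (Fin n)} (h : ∀ x, x ≤ σ x) : σ = 1 := by
  classical
  by_contra hne
  have hex : ∃ x, σ x ≠ x := by
    by_contra hc; push_neg at hc; exact hne (Equiv.ext hc)
  set T : Finset (Fin n) := Finset.univ.filter (fun x => σ x ≠ x) with hT
  have hTne : T.Nonempty := ⟨hex.choose, by simp [hT, hex.choose_spec]⟩
  set M := T.max' hTne with hMdef
  have hM : σ M ≠ M := by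
    have := T.max'_mem hTne
    simp only [hT, Finset.mem_filter, Finset.mem_univ, true_and] at this
    exact this
  have hMlt : M < σ M := lt_of_le_of_ne (h M) (Ne.symm hM)
  have hσM : σ (σ M) = σ M := by
    by_contra hc
    have hmem : σ M ∈ T := by simp [hT, hc]
    exact absurd (T.le_max' _ hmem) (not_le.mpr hMlt)
  exact hM (σ.injective hσM)

lemma eq_one_of_cycleCount {σ : Equiv.Perm (Fin n)} (hcc : cycleCount σ = n) : σ = 1 := by
  have hMset : Mset σ = Set.univ := by
    apply Set.eq_of_subset_of_ncard_le (Set.subset_univ _)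
    rw [Set.ncard_univ, Nat.card_eq_fintype_card, Fintype.card_fin, ← cycleCount_eq, hcc]
  apply eq_one_of_le
  intro x
  have hx : x ∈ Mset σ := by rw [hMset]; trivial
  exact hx (σ x) (Equiv.Perm.SameCycle.refl σ x).apply_right

lemma normPerm_one : normPerm (1 : Equiv.Perm (Fin n)) = 0 := by
  unfold normPerm
  rw [cycleCount_one]
  omega

lemma norm_merge {σ : Equiv.Perm (Fin n)} {u v : Fin n} (hne : u ≠ v)
    (hnot : ¬σ.SameCycle u v) :
    normPerm (σ * Equiv.swap u v) = normPerm σ + 1 := by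
  have h1 := cycleCount_merge hne hnot
  have h2 := cycleCount_le_n σ
  unfold normPerm
  omega

lemma norm_split {σ : Equiv.Perm (Fin n)} {u v : Fin n} (hsc : σ.SameCycle u v)
    (hne : u ≠ v) :
    normPerm (σ * Equiv.swap u v) + 1 = normPerm σ := by
  have h1 := cycleCount_split hsc hne
  have h2 := cycleCount_le_n (σ * Equiv.swap u v)
  have h4 : cycleCount σ ≠ n := by
    intro hc
    have h5 := eq_one_of_cycleCount hc
    rw [h5, Equiv.Perm.sameCycle_one] at hsc
    exact hne hsc
  have h6 := cycleCount_le_n σ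
  unfold normPerm
  omega

lemma norm_mul_swap_le (σ τ : Equiv.Perm (Fin n)) (hτ : τ.IsSwap) :
    normPerm (σ * τ) ≤ normPerm σ + 1 := by
  obtain ⟨u, v, hne, rfl⟩ := hτ
  by_cases hsc : σ.SameCycle u v
  · have := norm_split hsc hne; omega
  · rw [norm_merge hne hsc]

lemma exists_swap_list (σ : Equiv.Perm (Fin n)) :
    ∃ L : List (Equiv.Perm (Fin n)), (∀ τ ∈ L, τ.IsSwap) ∧ L.prod = σ ∧
      L.length = normPerm σ := by
  generalize hN : normPerm σ = N
  induction N generalizing σ with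
  | zero =>
    have hσ : σ = 1 := by
      have h2 := cycleCount_le_n σ
      refine eq_one_of_cycleCount ?_
      unfold normPerm at hN
      omega
    exact ⟨[], by simp, by simp [hσ], by simp⟩
  | succ N ih =>
    have hne1 : σ ≠ 1 := by
      intro h; rw [h, normPerm_one] at hN; omega
    have hex : ∃ x, σ x ≠ x := by
      by_contra hc; push_neg at hc; exact hne1 (Equiv.ext hc)
    obtain ⟨x, hx⟩ := hex
    have hsc : σ.SameCycle x (σ x) := (Equiv.Perm.SameCycle.refl σ x).apply_right
    have hnorm : normPerm (σ * Equiv.swap x (σ x)) + 1 = normPerm σ :=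
      norm_split hsc (Ne.symm hx)
    obtain ⟨L, hL1, hL2, hL3⟩ := ih (σ * Equiv.swap x (σ x)) (by omega)
    refine ⟨L ++ [Equiv.swap x (σ x)], ?_, ?_, ?_⟩
    · intro τ hτ
      rcases List.mem_append.mp hτ with h | h
      · exact hL1 τ h
      · rw [List.mem_singleton] at h
        exact ⟨x, σ x, Ne.symm hx, h⟩
    · rw [List.prod_append, hL2, List.prod_singleton, mul_assoc, Equiv.swap_mul_self, mul_one]
    · simp only [List.length_append, List.length_singleton, hL3]

lemma norm_mul_list_le (L : List (Equiv.Perm (Fin n))) (hL : ∀ τ ∈ L, τ.IsSwap) :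
    ∀ σ : Equiv.Perm (Fin n), normPerm (σ * L.prod) ≤ normPerm σ + L.length := by
  induction L with
  | nil => intro σ; simp
  | cons τ L ih =>
    intro σ
    have h1 : σ * (τ :: L).prod = (σ * τ) * L.prod := by
      rw [List.prod_cons, mul_assoc]
    rw [h1]
    have h2 := ih (fun a ha => hL a (List.mem_cons_of_mem _ ha)) (σ * τ)
    have h3 := norm_mul_swap_le σ τ (hL τ (List.mem_cons_self))
    rw [List.length_cons]
    omega

lemma norm_mul_le (σ ρ : Equiv.Perm (Fin n)) :
    normPerm (σ * ρ) ≤ normPerm σ + normPerm ρ := by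
  obtain ⟨L, h1, h2, h3⟩ := exists_swap_list ρ
  calc normPerm (σ * ρ) = normPerm (σ * L.prod) := by rw [h2]
    _ ≤ normPerm σ + L.length := norm_mul_list_le L h1 σ
    _ = normPerm σ + normPerm ρ := by rw [h3]

lemma norm_prod_le (L : List (Equiv.Perm (Fin n))) (hL : ∀ τ ∈ L, τ.IsSwap) :
    normPerm L.prod ≤ L.length := by
  have := norm_mul_list_le L hL 1
  rwa [one_mul, normPerm_one, zero_add] at this

lemma finRotate_moves (hn : 2 ≤ n) (x : Fin n) : finRotate n x ≠ x := by
  obtain ⟨m, rfl⟩ : ∃ m, n = m + 2 := ⟨n - 2, by omega⟩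
  rw [finRotate_succ_apply]
  intro h
  have h2 : (1 : Fin (m + 2)) = 0 := by
    have h3 : x + 1 = x + 0 := by rw [add_zero]; exact h
    exact add_left_cancel h3
  have h4 := congrArg Fin.val h2
  simp [Fin.val_one, Fin.val_zero] at h4

lemma sc_finRotate (hn : 2 ≤ n) (x y : Fin n) : (finRotate n).SameCycle x y := by
  obtain ⟨m, rfl⟩ : ∃ m, n = m + 2 := ⟨n - 2, by omega⟩
  exact isCycle_finRotate.sameCycle (finRotate_moves hn x) (finRotate_moves hn y)

lemma cycleCount_finRotate (hn : 2 ≤ n) : cycleCount (finRotate n) = 1 := by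
  rw [cycleCount_eq]
  have hM : Mset (finRotate n) = {(⟨0, by omega⟩ : Fin n)} := by
    ext x
    simp only [Mset, Set.mem_setOf_eq, Set.mem_singleton_iff]
    constructor
    · intro h
      refine le_antisymm (h _ (sc_finRotate hn x _)) ?_
      rw [Fin.le_def]
      exact Nat.zero_le _
    · rintro rfl y -
      rw [Fin.le_def]
      exact Nat.zero_le _
  rw [hM, Set.ncard_singleton]

lemma normPerm_finRotate (hn : 2 ≤ n) : normPerm (finRotate n) = n - 1 := by
  unfold normPerm
  rw [cycleCount_finRotate hn]

lemma Pp_finRotate (hn : 2 ≤ n) : Pp (finRotate n) := by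
  obtain ⟨m, rfl⟩ : ∃ m, n = m + 2 := ⟨n - 2, by omega⟩
  have key : ∀ x : Fin (m + 2), finRotate (m + 2) x < x → x = Fin.last (m + 1) := by
    intro x hx
    by_contra hne
    rw [finRotate_succ_apply] at hx
    have hlt : x < Fin.last (m + 1) := Fin.lt_last_iff_ne_last.mpr hne
    have hv := Fin.val_add_one_of_lt hlt
    rw [Fin.lt_def, hv] at hx
    omega
  intro x y _ hx hy
  rw [key x hx, key y hy]

lemma helper {ρ : Equiv.Perm (Fin n)} {u v y : Fin n}
    (hP : Pp ρ) (huv : ρ.SameCycle u v) (hne : u ≠ v)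
    (hyu : y ≠ u) (hyv : y ≠ v)
    (hdy : ρ y < y) (hρv : ρ v < u)
    (hy : (ρ * Equiv.swap u v).SameCycle u y) : False := by
  have hexq : ∃ s, 0 < s ∧ (ρ ^ s) v = u := by
    obtain ⟨s, hs⟩ := sc_exists_pow huv.symm
    refine ⟨s, ?_, hs⟩
    rcases Nat.eq_zero_or_pos s with rfl | h
    · rw [pow_zero] at hs; exact absurd hs.symm hne
    · exact h
  obtain ⟨hq, hqv⟩ := Nat.find_spec hexq
  set q := Nat.find hexq with hqdef
  have hminq : ∀ t, 0 < t → t < q → (ρ ^ t) v ≠ u :=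
    fun t ht htq hc => Nat.find_min hexq htq ⟨ht, hc⟩
  obtain ⟨s, hs⟩ := sc_exists_pow hy
  rcases split_orbit hne hq hqv hminq s with h | ⟨t, ht, htq, hteq⟩
  · rw [hs] at h; exact hyu h
  rw [hs] at hteq
  -- m : minimal period of v
  have hexm : ∃ s, 0 < s ∧ (ρ ^ s) v = v :=
    ⟨orderOf ρ, orderOf_pos ρ, by rw [pow_orderOf_eq_one]; rfl⟩
  obtain ⟨hm, hmv⟩ := Nat.find_spec hexm
  set m := Nat.find hexm with hmdef
  have hminm : ∀ t', 0 < t' → t' < m → (ρ ^ t') v ≠ v :=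
    fun t' h1 h2 hc => Nat.find_min hexm h2 ⟨h1, hc⟩
  have hqm : q < m := by
    by_contra hc
    push_neg at hc
    rcases eq_or_lt_of_le hc with he | hlt
    · rw [← he] at hqv
      rw [hmv] at hqv
      exact hne hqv.symm
    · have h2 : (ρ ^ (q - m)) ((ρ ^ m) v) = u := by
        rw [← Equiv.Perm.mul_apply, ← pow_add, Nat.sub_add_cancel hc]
        exact hqv
      rw [hmv] at h2
      exact hminq (q - m) (by omega) (by omega) h2
  -- r : minimal with ρ^r u = v
  have hexr : ∃ s, 0 < s ∧ (ρ ^ s) u = v := by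
    refine ⟨m - q, by omega, ?_⟩
    have h2 : (ρ ^ (m - q)) ((ρ ^ q) v) = v := by
      rw [← Equiv.Perm.mul_apply, ← pow_add, Nat.sub_add_cancel (le_of_lt hqm)]
      exact hmv
    rwa [hqv] at h2
  obtain ⟨hr, hru⟩ := Nat.find_spec hexr
  set r := Nat.find hexr with hrdef
  have hrm : r ≤ m - q := Nat.find_min' hexr ⟨by omega, by
    have h2 : (ρ ^ (m - q)) ((ρ ^ q) v) = v := by
      rw [← Equiv.Perm.mul_apply, ← pow_add, Nat.sub_add_cancel (le_of_lt hqm)]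
      exact hmv
    rwa [hqv] at h2⟩
  -- distinctness within a period
  have hdist : ∀ a b : ℕ, a < b → b < m → (ρ ^ a) v ≠ (ρ ^ b) v := by
    intro a b hab hbm hc
    have h2 : (ρ ^ ((m - b) + a)) v = v := by
      rw [pow_add, Equiv.Perm.mul_apply, hc, ← Equiv.Perm.mul_apply, ← pow_add,
        Nat.sub_add_cancel hbm.le, hmv]
    exact hminm _ (by omega) (by omega) h2
  -- step D
  have hDne : ∀ i, i < r → (ρ ^ i) u ≠ y := by
    intro i hir hc
    have h2 : (ρ ^ (q + i)) v = y := by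
      rw [show q + i = i + q by omega, pow_add, Equiv.Perm.mul_apply, hqv, hc]
    rw [← hteq] at h2
    exact hdist t (q + i) (by omega) (by omega) h2.symm
  -- ascending chain
  have hchain : ∀ i, i ≤ r → u ≤ (ρ ^ i) u := by
    intro i
    induction i with
    | zero => intro _; simp
    | succ i ih =>
      intro hir
      have h1 := ih (by omega)
      have hzy : (ρ ^ i) u ≠ y := hDne i (by omega)
      have hsz : ρ.SameCycle ((ρ ^ i) u) y := by
        have h2 : ρ.SameCycle u ((ρ ^ i) u) := sc_pow_self ρ u i
        have h3 : ρ.SameCycle v y := hteq ▸ sc_pow_self ρ v t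
        exact (h2.symm.trans huv).trans h3
      have hnz : ¬(ρ ((ρ ^ i) u) < (ρ ^ i) u) := fun hc => hzy (hP _ y hsz hc hdy)
      push_neg at hnz
      rw [pow_apply_succ]
      exact le_trans h1 hnz
  have hvu : u ≤ v := by
    have := hchain r le_rfl
    rwa [hru] at this
  have hsv : ρ.SameCycle v y := hteq ▸ sc_pow_self ρ v t
  have hnv : ¬(ρ v < v) := fun hc => (Ne.symm hyv) (hP v y hsv hc hdy)
  push_neg at hnv
  exact absurd hρv (not_lt.mpr (hvu.trans hnv))

lemma P_split {ρ : Equiv.Perm (Fin n)} {u v : Fin n} (hne : u ≠ v)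
    (hsc : ρ.SameCycle u v) (hP : Pp ρ) : Pp (ρ * Equiv.swap u v) := by
  have hnot := split_not_sc hsc hne
  have hback : (ρ * Equiv.swap u v) * Equiv.swap u v = ρ := by
    rw [mul_assoc, Equiv.swap_mul_self, mul_one]
  have hrefine : ∀ x y, (ρ * Equiv.swap u v).SameCycle x y → ρ.SameCycle x y := by
    intro x y h
    have h2 := merge_sc_le (σ := ρ * Equiv.swap u v) hne hnot h
    rwa [hback] at h2
  have hvu : (ρ * Equiv.swap u v) u = ρ v := by
    rw [Equiv.Perm.mul_apply, Equiv.swap_apply_left]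
  have hvv : (ρ * Equiv.swap u v) v = ρ u := by
    rw [Equiv.Perm.mul_apply, Equiv.swap_apply_right]
  have hvo : ∀ z, z ≠ u → z ≠ v → (ρ * Equiv.swap u v) z = ρ z := fun z h1 h2 => by
    rw [Equiv.Perm.mul_apply, Equiv.swap_apply_of_ne_of_ne h1 h2]
  have hswapc : ρ * Equiv.swap v u = ρ * Equiv.swap u v := by rw [Equiv.swap_comm]
  intro x y hxy dx dy
  by_cases hxu : x = u
  · subst hxu
    by_cases hyu : y = x
    · exact hyu.symm
    by_cases hyv : y = v
    · subst hyv; exact absurd hxy hnot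
    · exact (helper hP hsc hne hyu hyv
        (by rw [← hvo y hyu hyv]; exact dy) (by rw [← hvu]; exact dx) hxy).elim
  by_cases hxv : x = v
  · subst hxv
    by_cases hyv : y = x
    · exact hyv.symm
    by_cases hyu : y = u
    · subst hyu; exact absurd hxy.symm hnot
    · refine (helper (u := x) (v := u) hP hsc.symm hne.symm hyv hyu ?_ ?_ ?_).elim
      · rw [← hvo y hyu hyv]; exact dy
      · rw [← hvv]; exact dx
      · rw [hswapc]; exact hxy
  · by_cases hyu : y = u
    · subst hyu
      exact (helper hP hsc hne hxu hxv
        (by rw [← hvo x hxu hxv]; exact dx) (by rw [← hvu]; exact dy) hxy.symm).elim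
    by_cases hyv : y = v
    · subst hyv
      refine (helper (u := y) (v := u) hP hsc.symm hne.symm hxv hxu ?_ ?_ ?_).elim
      · rw [← hvo x hxu hxv]; exact dx
      · rw [← hvv]; exact dy
      · rw [hswapc]; exact hxy.symm
    · exact hP x y (hrefine x y hxy)
        (by rw [← hvo x hxu hxv]; exact dx) (by rw [← hvo y hyu hyv]; exact dy)

lemma precLe_Pp (hn : 2 ≤ n) :
    ∀ σ : Equiv.Perm (Fin n), precLe σ (finRotate n) → Pp σ := by
  suffices H : ∀ N (σ : Equiv.Perm (Fin n)),
      normPerm (σ⁻¹ * finRotate n) = N → precLe σ (finRotate n) → Pp σ by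
    intro σ h; exact H _ σ rfl h
  intro N
  induction N with
  | zero =>
    intro σ hN _
    have h1 : σ⁻¹ * finRotate n = 1 := by
      have h2 := cycleCount_le_n (σ⁻¹ * finRotate n)
      refine eq_one_of_cycleCount ?_
      unfold normPerm at hN
      omega
    have h2 : σ = finRotate n := inv_mul_eq_one.mp h1
    subst h2
    exact Pp_finRotate hn
  | succ N ih =>
    intro σ hN hpre
    set g := σ⁻¹ * finRotate n with hg
    have hg1 : g ≠ 1 := by
      intro h; rw [h, normPerm_one] at hN; omega
    have hex : ∃ x, g x ≠ x := by
      by_contra hc; push_neg at hc; exact hg1 (Equiv.ext hc)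
    obtain ⟨u, hu⟩ := hex
    set v := g u with hv
    have hne : u ≠ v := Ne.symm hu
    have hscg : g.SameCycle u v := (Equiv.Perm.SameCycle.refl g u).apply_right
    have hρinv : (σ * Equiv.swap u v)⁻¹ * finRotate n
        = g * Equiv.swap (g⁻¹ u) (g⁻¹ v) := by
      rw [mul_inv_rev, Equiv.swap_inv, mul_assoc, ← hg,
        Equiv.swap_mul_eq_mul_swap]
    have hgne : g⁻¹ u ≠ g⁻¹ v := fun h => hne (by simpa using congrArg g h)
    have hgsc : g.SameCycle (g⁻¹ u) (g⁻¹ v) := (Equiv.Perm.sameCycle_symm_apply_left.2 (Equiv.Perm.sameCycle_symm_apply_right.2 hscg) : _)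
    have hsplitg : cycleCount (g * Equiv.swap (g⁻¹ u) (g⁻¹ v)) = cycleCount g + 1 :=
      cycleCount_split hgsc hgne
    have hccle := cycleCount_le_n g
    have hccle2 := cycleCount_le_n (g * Equiv.swap (g⁻¹ u) (g⁻¹ v))
    have hNr : normPerm ((σ * Equiv.swap u v)⁻¹ * finRotate n) = N := by
      rw [hρinv]
      unfold normPerm at hN ⊢
      omega
    have htri : normPerm (finRotate n)
        ≤ normPerm (σ * Equiv.swap u v) + normPerm ((σ * Equiv.swap u v)⁻¹ * finRotate n) := by
      have h2 := norm_mul_le (σ * Equiv.swap u v) ((σ * Equiv.swap u v)⁻¹ * finRotate n)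
      rwa [mul_inv_cancel_left] at h2
    have hswapb := norm_mul_swap_le σ (Equiv.swap u v) ⟨u, v, hne, rfl⟩
    have hfr : normPerm (finRotate n) = n - 1 := normPerm_finRotate hn
    have hpreρ : precLe (σ * Equiv.swap u v) (finRotate n) := by
      unfold precLe at hpre ⊢
      rw [hfr, hNr]
      rw [hfr, ← hg, hN] at hpre
      rw [hNr, hfr] at htri
      omega
    have hPρ := ih (σ * Equiv.swap u v) hNr hpreρ
    have hnormρ : normPerm (σ * Equiv.swap u v) = normPerm σ + 1 := by
      unfold precLe at hpre hpreρ
      rw [hfr, hNr] at hpreρ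
      rw [hfr, ← hg, hN] at hpre
      omega
    have hccσρ : cycleCount (σ * Equiv.swap u v) + 1 = cycleCount σ := by
      have h1 := cycleCount_le_n σ
      have h2 := cycleCount_le_n (σ * Equiv.swap u v)
      have h3 := cycleCount_pos (by omega : 0 < n) σ
      unfold normPerm at hnormρ
      omega
    have hscρ : (σ * Equiv.swap u v).SameCycle u v := by
      by_cases hsc : σ.SameCycle u v
      · have := cycleCount_split hsc hne
        omega
      · exact merge_sc_uv hne hsc
    have hfinal := P_split hne hscρ hPρ
    have hback : (σ * Equiv.swap u v) * Equiv.swap u v = σ := by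
      rw [mul_assoc, Equiv.swap_mul_self, mul_one]
    rwa [hback] at hfinal

/-- descent exists along a decreasing segment -/
lemma desc_seg (f : Equiv.Perm (Fin n)) (x : Fin n) (s : ℕ) (hlt : (f ^ s) x < x) :
    ∃ t, t < s ∧ f ((f ^ t) x) < (f ^ t) x := by
  by_contra hc
  push_neg at hc
  have hmono : ∀ t, t ≤ s → x ≤ (f ^ t) x := by
    intro t
    induction t with
    | zero => intro _; simp
    | succ t ih =>
      intro h
      have h1 := ih (by omega)
      have h2 := hc t (by omega)
      rw [pow_apply_succ]
      exact le_trans h1 h2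
  exact absurd hlt (not_lt.mpr (hmono s le_rfl))

end S11Aux

open S11Aux Equiv Equiv.Perm in
/-- For a non-decreasing path γ = ((i₁ j₁),…,(i_k j_k)) ∈ Σ*_n(k), the j₁,…,j_k are pairwise
distinct and each j_l is a fixed point of γ_{l−1}. -/
theorem stmt11 (n k : ℕ) (i j : Fin k → Fin n) (hij : ∀ l, i l < j l)
    (hmono : Monotone i)
    (hγ : (fun l => Equiv.swap (i l) (j l)) ∈ SigmaSet n k) :
    Function.Injective j ∧
      ∀ l : Fin k, gammaP (fun m => Equiv.swap (i m) (j m)) (l : ℕ) (j l) = j l := by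
  classical
  obtain ⟨hswap, hnormk, hprec⟩ := hγ
  rcases Nat.eq_zero_or_pos k with rfl | hk
  · exact ⟨fun a => a.elim0, fun l => l.elim0⟩
  have hn2 : 2 ≤ n := by
    have h1 := hij ⟨0, hk⟩
    have h2 : ((j ⟨0, hk⟩ : Fin n) : ℕ) < n := (j ⟨0, hk⟩).isLt
    rw [Fin.lt_def] at h1
    omega
  set τf : Fin k → Equiv.Perm (Fin n) := fun l => Equiv.swap (i l) (j l) with hτf
  have hγ0 : gammaP τf 0 = 1 := by simp [gammaP]
  have hγstep : ∀ m (hm : m < k),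
      gammaP τf (m + 1) = gammaP τf m * Equiv.swap (i ⟨m, hm⟩) (j ⟨m, hm⟩) := by
    intro m hm
    unfold gammaP
    rw [List.prod_take_succ _ m (by simpa using hm)]
    congr 1
    simp [hτf]
  have hγk : gammaP τf k = (List.ofFn τf).prod := by
    unfold gammaP
    rw [List.take_of_length_le (by simp)]
  -- counting along the chain
  have hccstep : ∀ m (hm : m < k),
      cycleCount (gammaP τf (m + 1)) + 1 = cycleCount (gammaP τf m) ∨
      cycleCount (gammaP τf (m + 1)) = cycleCount (gammaP τf m) + 1 := by
    intro m hm
    rw [hγstep m hm]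
    by_cases hsc : (gammaP τf m).SameCycle (i ⟨m, hm⟩) (j ⟨m, hm⟩)
    · right; exact cycleCount_split hsc (ne_of_lt (hij _))
    · left; exact cycleCount_merge (ne_of_lt (hij _)) hsc
  have hlower : ∀ m, m ≤ k → n ≤ cycleCount (gammaP τf m) + m := by
    intro m
    induction m with
    | zero => intro _; rw [hγ0, cycleCount_one]; omega
    | succ m ih =>
      intro h
      have h1 := ih (by omega)
      rcases hccstep m (by omega) with h2 | h2 <;> omega
  have hcck : cycleCount (gammaP τf k) + k = n := by
    have h1 : normPerm (gammaP τf k) = k := by rw [hγk]; exact hnormk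
    have h2 := cycleCount_le_n (gammaP τf k)
    have h3 := hlower k le_rfl
    unfold normPerm at h1
    omega
  have hupper : ∀ d m₀, m₀ + d ≤ k →
      cycleCount (gammaP τf m₀) ≤ cycleCount (gammaP τf (m₀ + d)) + d := by
    intro d
    induction d with
    | zero => intro m₀ _; simp
    | succ d ih =>
      intro m₀ h
      have h1 := ih m₀ (by omega)
      have h2 : m₀ + (d + 1) = (m₀ + d) + 1 := rfl
      rw [h2]
      rcases hccstep (m₀ + d) (by omega) with h3 | h3 <;> omega
  have hccexact : ∀ m, m ≤ k → cycleCount (gammaP τf m) + m = n := by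
    intro m hm
    have h1 := hupper (k - m) m (by omega)
    rw [show m + (k - m) = k by omega] at h1
    have h2 := hlower m hm
    omega
  have hmerge : ∀ m (hm : m < k),
      ¬(gammaP τf m).SameCycle (i ⟨m, hm⟩) (j ⟨m, hm⟩) := by
    intro m hm hsc
    have h1 := cycleCount_split hsc (ne_of_lt (hij _))
    rw [← hγstep m hm] at h1
    have h2 := hccexact m (by omega)
    have h3 := hccexact (m + 1) (by omega)
    omega
  have hstepsc : ∀ m (hm : m < k),
      (gammaP τf (m + 1)).SameCycle (i ⟨m, hm⟩) (j ⟨m, hm⟩) := by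
    intro m hm
    rw [hγstep m hm]
    exact merge_sc_uv (ne_of_lt (hij _)) (hmerge m hm)
  have hmono_sc : ∀ m m', m ≤ m' → m' ≤ k →
      ∀ x y, (gammaP τf m).SameCycle x y → (gammaP τf m').SameCycle x y := by
    intro m m' hmm'
    induction m', hmm' using Nat.le_induction with
    | base => intro _ x y h; exact h
    | succ m' hm ih =>
      intro hm'k x y h
      have h1 := ih (by omega) x y h
      rw [hγstep m' (by omega)]
      exact merge_sc_le (ne_of_lt (hij _)) (hmerge m' (by omega)) h1
  -- precLe (γ l) c and hence Pp (γ l)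
  have hPγ : ∀ l, l ≤ k → Pp (gammaP τf l) := by
    intro l hl
    apply precLe_Pp hn2
    have hkn : k ≤ n := by have := hccexact k le_rfl; omega
    have hnγl : normPerm (gammaP τf l) = l := by
      have := hccexact l hl
      unfold normPerm
      omega
    have hdrop : (gammaP τf l)⁻¹ * gammaP τf k = ((List.ofFn τf).drop l).prod := by
      rw [hγk]
      conv_lhs => rw [← List.prod_take_mul_prod_drop (List.ofFn τf) l]
      exact inv_mul_cancel_left _ _
    have hXdrop : normPerm ((gammaP τf l)⁻¹ * gammaP τf k) ≤ k - l := by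
      rw [hdrop]
      have h1 := norm_prod_le ((List.ofFn τf).drop l) (by
        intro τ hτ
        have h2 := List.mem_of_mem_drop hτ
        rw [List.mem_ofFn] at h2
        obtain ⟨y, rfl⟩ := h2
        exact hswap y)
      have h2 : ((List.ofFn τf).drop l).length = k - l := by simp
      omega
    have hfr : normPerm (finRotate n) = n - 1 := normPerm_finRotate hn2
    have hXk : normPerm (finRotate n)
        = normPerm (gammaP τf k) + normPerm ((gammaP τf k)⁻¹ * finRotate n) := by
      rw [hγk]; exact hprec
    have hnk : normPerm (gammaP τf k) = k := by rw [hγk]; exact hnormk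
    have htri1 : normPerm (finRotate n)
        ≤ normPerm (gammaP τf l) + normPerm ((gammaP τf l)⁻¹ * finRotate n) := by
      have h2 := norm_mul_le (gammaP τf l) ((gammaP τf l)⁻¹ * finRotate n)
      rwa [mul_inv_cancel_left] at h2
    have htri2 : normPerm ((gammaP τf l)⁻¹ * finRotate n)
        ≤ normPerm ((gammaP τf l)⁻¹ * gammaP τf k)
          + normPerm ((gammaP τf k)⁻¹ * finRotate n) := by
      have h2 := norm_mul_le ((gammaP τf l)⁻¹ * gammaP τf k)
        ((gammaP τf k)⁻¹ * finRotate n)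
      rwa [mul_assoc, mul_inv_cancel_left] at h2
    unfold precLe
    omega
  -- support lemmas
  have hsupp_step : ∀ m (hm : m < k) x, gammaP τf m x ≠ x → gammaP τf (m + 1) x ≠ x := by
    intro m hm x hx
    rw [hγstep m hm]
    rcases eq_or_ne x (i ⟨m, hm⟩) with rfl | hxu
    · intro hc
      rw [Equiv.Perm.mul_apply, Equiv.swap_apply_left] at hc
      exact hmerge m hm (by
        rw [← hc]
        exact ((Equiv.Perm.SameCycle.refl (gammaP τf m) (j ⟨m, hm⟩)).apply_right).symm)
    rcases eq_or_ne x (j ⟨m, hm⟩) with rfl | hxv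
    · intro hc
      rw [Equiv.Perm.mul_apply, Equiv.swap_apply_right] at hc
      exact hmerge m hm (by
        rw [← hc]
        exact (Equiv.Perm.SameCycle.refl (gammaP τf m) (i ⟨m, hm⟩)).apply_right)
    · rw [Equiv.Perm.mul_apply, Equiv.swap_apply_of_ne_of_ne hxu hxv]
      exact hx
  have hsupp_mono : ∀ m m', m ≤ m' → m' ≤ k →
      ∀ x, gammaP τf m x ≠ x → gammaP τf m' x ≠ x := by
    intro m m' hmm'
    induction m', hmm' using Nat.le_induction with
    | base => intro _ x h; exact h
    | succ m' hm ih =>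
      intro hm'k x h
      exact hsupp_step m' (by omega) x (ih (by omega) x h)
  have hsupp_sub : ∀ m, m ≤ k → ∀ x, gammaP τf m x ≠ x →
      ∃ m' : Fin k, (m' : ℕ) < m ∧ (x = i m' ∨ x = j m') := by
    intro m
    induction m with
    | zero =>
      intro _ x hx
      rw [hγ0] at hx
      simp at hx
    | succ m ih =>
      intro hm x hx
      by_cases hxm : gammaP τf m x ≠ x
      · obtain ⟨m', h1, h2⟩ := ih (by omega) x hxm
        exact ⟨m', by omega, h2⟩
      · push_neg at hxm
        rw [hγstep m (by omega)] at hx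
        by_cases hxu : x = i ⟨m, by omega⟩
        · exact ⟨⟨m, by omega⟩, by simp, Or.inl hxu⟩
        by_cases hxv : x = j ⟨m, by omega⟩
        · exact ⟨⟨m, by omega⟩, by simp, Or.inr hxv⟩
        · rw [Equiv.Perm.mul_apply, Equiv.swap_apply_of_ne_of_ne hxu hxv, hxm] at hx
          exact absurd rfl hx
  -- MAIN CLAIM
  have main : ∀ l : Fin k, gammaP τf (l : ℕ) (j l) = j l := by
    intro l
    by_contra hmoved
    obtain ⟨m', hm'l, hcase⟩ := hsupp_sub (l : ℕ) (le_of_lt l.isLt) (j l) hmoved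
    have hjne : j l = j m' := by
      rcases hcase with h | h
      · exfalso
        have h1 : i m' ≤ i l := hmono (le_of_lt (show m' < l from hm'l))
        have h2 := hij l
        rw [Fin.le_def] at h1
        rw [Fin.lt_def] at h2
        have h3 := congrArg Fin.val h
        omega
      · exact h
    have hl1 : (l : ℕ) < k := l.isLt
    have hπeq : gammaP τf ((l : ℕ) + 1)
        = gammaP τf (l : ℕ) * Equiv.swap (i l) (j l) := by
      have := hγstep (l : ℕ) hl1
      simpa using this
    have hab : i l ≠ j l := ne_of_lt (hij l)
    have hnab : ¬(gammaP τf (l : ℕ)).SameCycle (i l) (j l) := by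
      have := hmerge (l : ℕ) hl1
      simpa using this
    have hPπ : Pp (gammaP τf ((l : ℕ) + 1)) := hPγ ((l : ℕ) + 1) hl1
    have hscm : (gammaP τf ((m' : ℕ) + 1)).SameCycle (i m') (j m') := by
      have := hstepsc (m' : ℕ) m'.isLt
      simpa using this
    have hscl : (gammaP τf (l : ℕ)).SameCycle (i m') (j l) := by
      rw [hjne]
      exact hmono_sc ((m' : ℕ) + 1) (l : ℕ) (by omega) (le_of_lt hl1) _ _ hscm
    have him_lt : i m' < i l := by
      refine lt_of_le_of_ne (hmono (le_of_lt hm'l)) (fun h => hnab (h ▸ hscl))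
    have hscπab : (gammaP τf ((l : ℕ) + 1)).SameCycle (i l) (j l) := by
      rw [hπeq]
      exact merge_sc_uv hab hnab
    -- path 1 : from (j l) to (i l), through the γ-cycle of (i l)
    have hexd : ∃ p, 0 < p ∧ ((gammaP τf (l : ℕ)) ^ p) (i l) = i l :=
      ⟨orderOf _, orderOf_pos _, by rw [pow_orderOf_eq_one]; rfl⟩
    obtain ⟨hd, hdspec⟩ := Nat.find_spec hexd
    set d := Nat.find hexd with hddef
    have havoid1 : ∀ t, 0 < t → t < d →
        ((gammaP τf (l : ℕ)) ^ t) (i l) ≠ j l ∧ ((gammaP τf (l : ℕ)) ^ t) (i l) ≠ i l := by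
      intro t ht htd
      constructor
      · intro h
        exact hnab (h ▸ sc_pow_self (gammaP τf (l : ℕ)) (i l) t)
      · intro h
        exact Nat.find_min hexd htd ⟨ht, h⟩
    have hpath1 : ∀ t, 0 < t → t ≤ d →
        ((gammaP τf ((l : ℕ) + 1)) ^ t) (j l) = ((gammaP τf (l : ℕ)) ^ t) (i l) := by
      intro t ht htd
      have h2 : gammaP τf ((l : ℕ) + 1) = gammaP τf (l : ℕ) * Equiv.swap (j l) (i l) := by
        rw [hπeq, Equiv.swap_comm]
      rw [h2]
      exact guided (j l) (i l) (fun t' h1' h2' => havoid1 t' h1' h2') t ht htd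
    have hda : ((gammaP τf ((l : ℕ) + 1)) ^ d) (j l) = i l := by
      rw [hpath1 d hd le_rfl, hdspec]
    obtain ⟨t₁, ht₁d, hdesc₁⟩ := desc_seg (gammaP τf ((l : ℕ) + 1)) (j l) d
      (by rw [hda]; exact hij l)
    -- path 2 : from (i l) to (i m'), through the γ-cycle of (j l)
    have hexe : ∃ s, 0 < s ∧ ((gammaP τf (l : ℕ)) ^ s) (j l) = i m' := by
      obtain ⟨s, hs⟩ := sc_exists_pow hscl.symm
      refine ⟨s, ?_, hs⟩
      rcases Nat.eq_zero_or_pos s with rfl | h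
      · rw [pow_zero, Equiv.Perm.one_apply] at hs
        exact absurd (hs ▸ (him_lt.trans (hij l))) (lt_irrefl _)
      · exact h
    obtain ⟨he, hespec⟩ := Nat.find_spec hexe
    set e := Nat.find hexe with hedef
    have havoid2 : ∀ t, 0 < t → t < e →
        ((gammaP τf (l : ℕ)) ^ t) (j l) ≠ i l ∧ ((gammaP τf (l : ℕ)) ^ t) (j l) ≠ j l := by
      intro t ht hte
      constructor
      · intro h
        exact hnab ((h ▸ sc_pow_self (gammaP τf (l : ℕ)) (j l) t)).symm
      · intro h
        have h2 : ((gammaP τf (l : ℕ)) ^ (e - t)) (((gammaP τf (l : ℕ)) ^ t) (j l)) = i m' := by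
          rw [← Equiv.Perm.mul_apply, ← pow_add, Nat.sub_add_cancel (le_of_lt hte)]
          exact hespec
        rw [h] at h2
        exact Nat.find_min hexe (show e - t < e by omega) ⟨by omega, h2⟩
    have hpath2 : ∀ t, 0 < t → t ≤ e →
        ((gammaP τf ((l : ℕ) + 1)) ^ t) (i l) = ((gammaP τf (l : ℕ)) ^ t) (j l) := by
      intro t ht hte
      rw [hπeq]
      exact guided (i l) (j l) (fun t' h1' h2' => havoid2 t' h1' h2') t ht hte
    have hea : ((gammaP τf ((l : ℕ) + 1)) ^ e) (i l) = i m' := by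
      rw [hpath2 e he le_rfl, hespec]
    obtain ⟨t₂, ht₂e, hdesc₂⟩ := desc_seg (gammaP τf ((l : ℕ) + 1)) (i l) e
      (by rw [hea]; exact him_lt)
    -- the two descents are in the same cycle
    have hsc12 : (gammaP τf ((l : ℕ) + 1)).SameCycle
        (((gammaP τf ((l : ℕ) + 1)) ^ t₁) (j l)) (((gammaP τf ((l : ℕ) + 1)) ^ t₂) (i l)) := by
      have h1 := sc_pow_self (gammaP τf ((l : ℕ) + 1)) (j l) t₁
      have h2 := sc_pow_self (gammaP τf ((l : ℕ) + 1)) (i l) t₂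
      exact (h1.symm.trans hscπab.symm).trans h2
    have heq := hPπ _ _ hsc12 hdesc₁ hdesc₂
    -- but they are distinct
    rcases Nat.eq_zero_or_pos t₁ with rfl | h1 <;> rcases Nat.eq_zero_or_pos t₂ with rfl | h2
    · rw [pow_zero] at heq
      simp only [Equiv.Perm.one_apply] at heq
      exact hab heq.symm
    · rw [pow_zero] at heq
      simp only [Equiv.Perm.one_apply] at heq
      rw [hpath2 t₂ h2 (le_of_lt ht₂e)] at heq
      exact (havoid2 t₂ h2 ht₂e).2 heq.symm
    · rw [pow_zero] at heq
      simp only [Equiv.Perm.one_apply] at heq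
      rw [hpath1 t₁ h1 (le_of_lt ht₁d)] at heq
      exact (havoid1 t₁ h1 ht₁d).2 heq
    · rw [hpath1 t₁ h1 (le_of_lt ht₁d), hpath2 t₂ h2 (le_of_lt ht₂e)] at heq
      apply hnab
      have h3 := sc_pow_self (gammaP τf (l : ℕ)) (i l) t₁
      rw [heq] at h3
      exact h3.trans (sc_pow_self (gammaP τf (l : ℕ)) (j l) t₂).symm
  -- injectivity
  have hinj : Function.Injective j := by
    intro l₁ l₂ heq
    by_contra hne
    have hwlog : ∀ l₁ l₂ : Fin k, j l₁ = j l₂ → l₁ < l₂ → False := by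
      intro l₁ l₂ heq hlt
      have h1 : gammaP τf ((l₁ : ℕ) + 1) (j l₁) ≠ j l₁ := by
        intro hc
        have h2 : (gammaP τf ((l₁ : ℕ) + 1)).SameCycle (i l₁) (j l₁) := by
          have := hstepsc (l₁ : ℕ) l₁.isLt
          simpa using this
        have h3 := h2.symm.eq_of_left hc
        exact (ne_of_lt (hij l₁)) h3.symm
      have h3 : gammaP τf (l₂ : ℕ) (j l₁) ≠ j l₁ := by
        refine hsupp_mono ((l₁ : ℕ) + 1) (l₂ : ℕ) ?_ (le_of_lt l₂.isLt) _ h1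
        rw [Fin.lt_def] at hlt
        omega
      rw [heq] at h3
      exact h3 (main l₂)
    rcases lt_or_gt_of_ne hne with h | h
    · exact hwlog l₁ l₂ heq h
    · exact hwlog l₂ l₁ heq.symm h
  exact ⟨hinj, main⟩
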